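/- arXiv:1405.4412 — 2 statements merged into one kernel-verified Lean document; each statement's English description precedes it below -/
import Mathlib

section
/- For every integer n > 8 and every ε > 0, the limit as α → 0⁺ of ∫₀^{ε/α} [1 - ((n-4)(n²-4n+8)/(n(n-2)))·σ⁴/(1+σ²)²]·(1+σ²)^{4-n}·σ^{n-1} dσ exists and equals a strictly negative real number (depending only on n). -/
open Filter MeasureTheory

lemma aux_pow_le (σ : ℝ) (hσ : 0 ≤ σ) (m p : ℕ) (h : m ≤ 2 * p) :
    σ ^ m ≤ (1 + σ ^ 2) ^ p := by
  have h1 : (1:ℝ) ≤ max 1 σ := le_max_left 1 σ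
  calc σ ^ m ≤ (max 1 σ) ^ m := pow_le_pow_left₀ hσ (le_max_right 1 σ) m
    _ ≤ (max 1 σ) ^ (2 * p) := pow_le_pow_right₀ h1 h
    _ = ((max 1 σ) ^ 2) ^ p := by rw [pow_mul]
    _ ≤ (1 + σ ^ 2) ^ p := by
        apply pow_le_pow_left₀ (by positivity)
        rcases le_total σ 1 with hc | hc
        · rw [max_eq_left hc]; nlinarith
        · rw [max_eq_right hc]; nlinarith

lemma aux_integrable (m p : ℕ) (h : m + 2 ≤ 2 * p) :
    IntegrableOn (fun σ : ℝ => σ ^ m * ((1 + σ ^ 2) ^ p)⁻¹) (Set.Ioi 0) := by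
  obtain ⟨q, rfl⟩ : ∃ q, p = q + 1 := ⟨p - 1, by omega⟩
  apply Integrable.mono (integrable_inv_one_add_sq.restrict (s := Set.Ioi 0))
  · apply Continuous.aestronglyMeasurable
    exact (continuous_pow m).mul
      (((continuous_const.add (continuous_pow 2)).pow (q + 1)).inv₀ fun x => by simp only [Pi.pow_apply, Pi.add_apply]; positivity)
  · filter_upwards [ae_restrict_mem measurableSet_Ioi] with σ hσ
    have hσ0 : (0:ℝ) ≤ σ := le_of_lt hσ
    have hb : (0:ℝ) < 1 + σ ^ 2 := by positivity
    rw [Real.norm_eq_abs, Real.norm_eq_abs, abs_of_nonneg (by positivity),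
      abs_of_nonneg (by positivity)]
    rw [pow_succ, mul_inv]
    calc σ ^ m * (((1 + σ ^ 2) ^ q)⁻¹ * (1 + σ ^ 2)⁻¹)
        ≤ (1 + σ ^ 2) ^ q * (((1 + σ ^ 2) ^ q)⁻¹ * (1 + σ ^ 2)⁻¹) := by
          gcongr <;> first | positivity | exact aux_pow_le σ hσ0 m q (by omega)
      _ = (1 + σ ^ 2)⁻¹ := by field_simp

lemma aux_tendsto (m p : ℕ) (h : m + 1 ≤ 2 * p) :
    Tendsto (fun σ : ℝ => σ ^ m * ((1 + σ ^ 2) ^ p)⁻¹) atTop (nhds 0) := by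
  apply tendsto_of_tendsto_of_tendsto_of_le_of_le' tendsto_const_nhds
    tendsto_inv_atTop_zero
  · filter_upwards [eventually_ge_atTop (0:ℝ)] with σ hσ
    positivity
  · filter_upwards [eventually_ge_atTop (1:ℝ)] with σ hσ
    have hσ0 : (0:ℝ) < σ := lt_of_lt_of_le one_pos hσ
    have h1 : σ ^ (m + 1) ≤ (1 + σ ^ 2) ^ p := by
      calc σ ^ (m + 1) ≤ σ ^ (2 * p) := pow_le_pow_right₀ hσ h
        _ = (σ ^ 2) ^ p := by rw [pow_mul]
        _ ≤ (1 + σ ^ 2) ^ p := by apply pow_le_pow_left₀ (by positivity); linarith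
    calc σ ^ m * ((1 + σ ^ 2) ^ p)⁻¹ ≤ σ ^ m * (σ ^ (m + 1))⁻¹ := by
          gcongr <;> first | positivity | exact h1
      _ = σ⁻¹ := by rw [pow_succ]; field_simp
  -- done

lemma aux_deriv (q r : ℕ) (σ : ℝ) :
    HasDerivAt (fun σ : ℝ => σ ^ (q + 1) * ((1 + σ ^ 2) ^ (r + 1))⁻¹)
      ((((q:ℝ) + 1) * σ ^ q * (1 + σ ^ 2) - σ ^ (q + 1) * (((r:ℝ) + 1) * (2 * σ)))
        * ((1 + σ ^ 2) ^ (r + 2))⁻¹) σ := by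
  have hb : (0:ℝ) < 1 + σ ^ 2 := by positivity
  have h1 : HasDerivAt (fun σ : ℝ => 1 + σ ^ 2) (2 * σ) σ := by
    simpa using (hasDerivAt_pow 2 σ).const_add 1
  have h2 : HasDerivAt (fun σ : ℝ => (1 + σ ^ 2) ^ (r + 1))
      ((((r:ℕ) + 1 : ℕ) : ℝ) * (1 + σ ^ 2) ^ (r + 1 - 1) * (2 * σ)) σ := h1.pow (r + 1)
  have h3 := h2.inv (by positivity)
  have h4 := (hasDerivAt_pow (q + 1) σ).mul h3
  refine h4.congr_deriv ?_
  simp only [Nat.add_sub_cancel, Pi.inv_apply]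
  push_cast
  field_simp
  ring

set_option maxHeartbeats 2000000 in
theorem neg_limit_of_integral (n : ℕ) (hn : 8 < n) :
    ∃ L : ℝ, L < 0 ∧ ∀ ε : ℝ, 0 < ε →
      Tendsto (fun α : ℝ => ∫ σ in (0:ℝ)..(ε / α),
          (1 - (((n : ℝ) - 4) * ((n : ℝ) ^ 2 - 4 * n + 8) / ((n : ℝ) * ((n : ℝ) - 2)))
              * σ ^ 4 / (1 + σ ^ 2) ^ 2)
            * (1 + σ ^ 2) ^ ((4 : ℤ) - n) * σ ^ (n - 1))
        (nhdsWithin 0 (Set.Ioi 0)) (nhds L) := by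
  obtain ⟨k, rfl⟩ : ∃ k, n = k + 9 := ⟨n - 9, by omega⟩
  have hbpos : ∀ σ : ℝ, (0:ℝ) < 1 + σ ^ 2 := fun σ => by positivity
  set K : ℝ := (k : ℝ) with hKdef
  have hK0 : 0 ≤ K := Nat.cast_nonneg k
  -- the constants
  set c : ℝ := (K + 5) * ((K + 9) ^ 2 - 4 * (K + 9) + 8) / ((K + 9) * (K + 7)) with hc
  set a0 : ℝ := (K + 11) * ((K + 9) ^ 2 - 4 * (K + 9) + 8) / (4 * (K + 9) * (K + 7) * (K + 6))
    with ha0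
  set a1 : ℝ := (K + 5) * ((K + 9) ^ 2 - 4 * (K + 9) + 8) / (2 * (K + 9) * (K + 7) * (K + 6))
    with ha1
  set lam : ℝ := 1 - (K + 11) * ((K + 9) ^ 2 - 4 * (K + 9) + 8) / (4 * (K + 7) * (K + 6))
    with hlam
  -- the functions
  set f1 : ℝ → ℝ := fun σ => σ ^ (k + 8) * ((1 + σ ^ 2) ^ (k + 5))⁻¹ with hf1
  set f2 : ℝ → ℝ := fun σ => σ ^ (k + 12) * ((1 + σ ^ 2) ^ (k + 7))⁻¹ with hf2
  set ψ : ℝ → ℝ := fun σ => f1 σ - c * f2 σ with hψ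
  -- integrabilities
  have hint1 : IntegrableOn f1 (Set.Ioi 0) := aux_integrable (k + 8) (k + 5) (by omega)
  have hint2 : IntegrableOn f2 (Set.Ioi 0) := aux_integrable (k + 12) (k + 7) (by omega)
  have hintψ : IntegrableOn ψ (Set.Ioi 0) := hint1.sub (hint2.const_mul c)
  -- positivity of J
  set J : ℝ := ∫ σ in Set.Ioi (0:ℝ), f1 σ with hJ
  have hJpos : 0 < J := by
    rw [hJ, setIntegral_pos_iff_support_of_nonneg_ae]
    · have hsub : Set.Ioi (0:ℝ) ⊆ Function.support f1 ∩ Set.Ioi 0 := by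
        intro σ hσ
        have hσ0 : (0:ℝ) < σ := hσ
        refine ⟨?_, hσ⟩
        show f1 σ ≠ 0
        simp only [hf1]
        positivity
      calc (0:ENNReal) < volume (Set.Ioi (0:ℝ)) := by simp [Real.volume_Ioi]
        _ ≤ volume (Function.support f1 ∩ Set.Ioi 0) := measure_mono hsub
    · filter_upwards [ae_restrict_mem measurableSet_Ioi] with σ hσ
      have : (0:ℝ) < σ := hσ
      positivity
    · exact hint1
  -- the antiderivative
  set F : ℝ → ℝ := fun σ => a0 * (σ ^ (k + 9) * ((1 + σ ^ 2) ^ (k + 5))⁻¹)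
      + a1 * (σ ^ (k + 11) * ((1 + σ ^ 2) ^ (k + 6))⁻¹) with hF
  have hFderiv : ∀ σ ∈ Set.Ioi (0:ℝ), HasDerivAt F (ψ σ - lam * f1 σ) σ := by
    intro σ _
    have d0 := (aux_deriv (k + 8) (k + 4) σ).const_mul a0
    have d1 := (aux_deriv (k + 10) (k + 5) σ).const_mul a1
    have hD := d0.add d1
    have hb := (hbpos σ).ne'
    have h9 : K + 9 ≠ 0 := by positivity
    have h7 : K + 7 ≠ 0 := by positivity
    have h6 : K + 6 ≠ 0 := by positivity
    refine hD.congr_deriv ?_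
    simp only [hψ, hf1, hf2, hc, ha0, ha1, hlam]
    push_cast
    field_simp
    ring
  have hFcont : Continuous F := by
    have cb : ∀ r : ℕ, Continuous fun σ : ℝ => ((1 + σ ^ 2) ^ r)⁻¹ := fun r =>
      ((continuous_const.add (continuous_pow 2)).pow r).inv₀ fun x => by simp only [Pi.pow_apply, Pi.add_apply]; positivity
    exact (continuous_const.mul ((continuous_pow _).mul (cb _))).add
      (continuous_const.mul ((continuous_pow _).mul (cb _)))
  have hFtop : Tendsto F atTop (nhds 0) := by
    have t0 := (aux_tendsto (k + 9) (k + 5) (by omega)).const_mul a0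
    have t1 := (aux_tendsto (k + 11) (k + 6) (by omega)).const_mul a1
    simpa using t0.add t1
  have hintcomb : IntegrableOn (fun σ => ψ σ - lam * f1 σ) (Set.Ioi 0) :=
    hintψ.sub (hint1.const_mul lam)
  have hkey : ∫ σ in Set.Ioi (0:ℝ), (ψ σ - lam * f1 σ) = 0 - F 0 :=
    integral_Ioi_of_hasDerivAt_of_tendsto (hFcont.continuousWithinAt) hFderiv hintcomb hFtop
  have hF0 : F 0 = 0 := by simp [hF]
  have hval : ∫ σ in Set.Ioi (0:ℝ), ψ σ = lam * J := by
    have := hkey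
    rw [integral_sub hintψ ((hint1.const_mul lam)), integral_const_mul, hF0] at this
    rw [hJ]
    linarith
  -- negativity of lam
  have hlamneg : lam < 0 := by
    rw [hlam, sub_neg]
    rw [lt_div_iff₀ (by positivity)]
    nlinarith [hK0, sq_nonneg K, mul_nonneg (mul_nonneg hK0 hK0) hK0]
  refine ⟨lam * J, mul_neg_of_neg_of_pos hlamneg hJpos, fun ε hε => ?_⟩
  have htends : Tendsto (fun α : ℝ => ε / α) (nhdsWithin 0 (Set.Ioi 0)) atTop := by
    simpa [div_eq_mul_inv] using (tendsto_inv_nhdsGT_zero (𝕜 := ℝ)).const_mul_atTop hε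
  have hmain : Tendsto (fun α : ℝ => ∫ σ in (0:ℝ)..(ε / α), ψ σ)
      (nhdsWithin 0 (Set.Ioi 0)) (nhds (lam * J)) := by
    rw [← hval]
    exact intervalIntegral_tendsto_integral_Ioi 0 hintψ htends
  apply hmain.congr
  intro α
  apply intervalIntegral.integral_congr
  intro σ _
  have hb := (hbpos σ).ne'
  have hzpow : (1 + σ ^ 2 : ℝ) ^ ((4:ℤ) - ((k + 9 : ℕ) : ℤ)) = ((1 + σ ^ 2) ^ (k + 5))⁻¹ := by
    rw [show (4:ℤ) - ((k + 9 : ℕ) : ℤ) = -((k + 5 : ℕ) : ℤ) by push_cast; ring, zpow_neg,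
      zpow_natCast]
  have hcc : (((k + 9 : ℕ) : ℝ) - 4) * (((k + 9 : ℕ) : ℝ) ^ 2 - 4 * ((k + 9 : ℕ) : ℝ) + 8)
      / (((k + 9 : ℕ) : ℝ) * (((k + 9 : ℕ) : ℝ) - 2)) = c := by
    rw [hc, hKdef]; push_cast; ring
  simp only [show k + 9 - 1 = k + 8 by omega, hzpow, hcc, hψ, hf1, hf2]
  have hbk : (1 + σ ^ 2) ^ k ≠ 0 := pow_ne_zero _ hb
  simp only [pow_add]
  field_simp
end

section
/- Let F: [0,∞) → [0,∞) be a C¹ function satisfying (i) F'(t) ≤ C·F(t)·(1 + F(t)^{1/2}) for all t ≥ 0, and (ii) ∫₀^∞ F(t) dt < ∞. Then lim_{t→∞} F(t) = 0. -/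
open MeasureTheory Filter

theorem F2_tendsto_zero (C : ℝ) (hC : 0 < C) (F F' : ℝ → ℝ)
    (hF0 : ∀ t, 0 ≤ t → 0 ≤ F t)
    (hderiv : ∀ t, 0 ≤ t → HasDerivAt F (F' t) t)
    (hcont : ContinuousOn F' (Set.Ici 0))
    (hineq : ∀ t, 0 ≤ t → F' t ≤ C * F t * (1 + Real.sqrt (F t)))
    (hint : IntegrableOn F (Set.Ici 0)) :
    Tendsto F atTop (nhds 0) := by
  have hFc : ∀ t : ℝ, 0 ≤ t → ContinuousAt F t := fun t ht => (hderiv t ht).continuousAt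
  -- Key backward-persistence lemma
  have key : ∀ ε : ℝ, 0 < ε → ε ≤ 1 → ∀ a t : ℝ, 0 ≤ a → a ≤ t → F a ≤ ε/2 → ε ≤ F t →
      ε/(4*C) ≤ t - a := by
    intro ε hε hε1 a t ha hat hFa hFt
    set B : Set ℝ := (Set.Icc a t ∩ F ⁻¹' Set.Ici 1) ∪ {t} with hBdef
    have hBsub : B ⊆ Set.Icc a t := by
      intro x hx
      rcases hx with ⟨h1, _⟩ | h
      · exact h1
      · rw [Set.mem_singleton_iff.1 h]; exact ⟨hat, le_refl t⟩
    have hBne : B.Nonempty := ⟨t, Or.inr rfl⟩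
    have hFcont : ContinuousOn F (Set.Icc a t) := fun x hx =>
      (hFc x (ha.trans hx.1)).continuousWithinAt
    have hBclosed : IsClosed B :=
      (hFcont.preimage_isClosed_of_isClosed isClosed_Icc isClosed_Ici).union isClosed_singleton
    have hBcomp : IsCompact B := isCompact_Icc.of_isClosed_subset hBclosed hBsub
    have hb : sInf B ∈ B := hBcomp.sInf_mem hBne
    set b := sInf B with hbdef
    have hbmem : b ∈ Set.Icc a t := hBsub hb
    have hFb : ε ≤ F b := by
      rcases hb with ⟨_, h2⟩ | h
      · exact hε1.trans h2
      · rw [Set.mem_singleton_iff.1 h]; exact hFt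
    have hlt1 : ∀ s ∈ Set.Ioo a b, F s < 1 := by
      intro s hs
      by_contra hcon
      push_neg at hcon
      have hsB : s ∈ B := Or.inl ⟨⟨hs.1.le, hs.2.le.trans hbmem.2⟩, hcon⟩
      exact absurd (csInf_le hBcomp.bddBelow hsB) (not_le.2 hs.2)
    set g : ℝ → ℝ := fun s => 2*C*s - F s with hgdef
    have hgmono : MonotoneOn g (Set.Icc a b) := by
      have hIccsub : Set.Icc a b ⊆ Set.Icc a t := Set.Icc_subset_Icc le_rfl hbmem.2
      have hgderiv : ∀ x ∈ Set.Ioo a b, HasDerivAt g (2*C - F' x) x := by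
        intro x hx
        have hx0 : 0 ≤ x := ha.trans hx.1.le
        have h1 : HasDerivAt (fun s : ℝ => 2*C*s) (2*C) x := by
          simpa using (hasDerivAt_id x).const_mul (2*C)
        exact h1.sub (hderiv x hx0)
      apply monotoneOn_of_deriv_nonneg (convex_Icc a b)
      · exact ((continuous_const.mul continuous_id).continuousOn.sub
          (hFcont.mono hIccsub))
      · intro x hx
        rw [interior_Icc] at hx
        exact (hgderiv x hx).differentiableAt.differentiableWithinAt
      · intro x hx
        rw [interior_Icc] at hx
        rw [(hgderiv x hx).deriv]
        have hx0 : 0 ≤ x := ha.trans hx.1.le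
        have hFx0 : 0 ≤ F x := hF0 x hx0
        have hFx1 : F x < 1 := hlt1 x hx
        have hsqrt : Real.sqrt (F x) ≤ 1 := by
          rw [show (1:ℝ) = Real.sqrt 1 by simp]
          exact Real.sqrt_le_sqrt hFx1.le
        have h2 : F x * (1 + Real.sqrt (F x)) ≤ 2 := by
          nlinarith [Real.sqrt_nonneg (F x),
            mul_le_one₀ hFx1.le (Real.sqrt_nonneg (F x)) hsqrt]
        have h3 := mul_le_mul_of_nonneg_left h2 hC.le
        have := hineq x hx0
        nlinarith
    have hgab : g a ≤ g b := hgmono ⟨le_rfl, hbmem.1⟩ ⟨hbmem.1, le_rfl⟩ hbmem.1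
    have hbt : b ≤ t := hbmem.2
    have hab : a ≤ b := hbmem.1
    rw [div_le_iff₀ (by positivity)]
    simp only [hgdef] at hgab
    nlinarith
  rw [Metric.tendsto_atTop]
  intro ε0 hε0
  set ε := min ε0 1 with hεdef
  have hεpos : 0 < ε := lt_min hε0 one_pos
  have hε1 : ε ≤ 1 := min_le_right _ _
  set δ := ε/(4*C) with hδdef
  have hδpos : 0 < δ := by positivity
  obtain ⟨T, hT0, hTtail⟩ : ∃ T : ℝ, 0 ≤ T ∧ ∫ x in Set.Ioi T, F x < ε/2*δ := by
    have hIoi0 : IntegrableOn F (Set.Ioi 0) := hint.mono_set Set.Ioi_subset_Ici_self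
    have htend := MeasureTheory.intervalIntegral_tendsto_integral_Ioi 0 hIoi0
      (tendsto_id (α := ℝ))
    have hc : (0:ℝ) < ε/2*δ := by positivity
    have hev : ∀ᶠ T in atTop, (∫ x in Set.Ioi 0, F x) - ε/2*δ < ∫ x in (0:ℝ)..T, F x :=
      htend.eventually (eventually_gt_nhds (by linarith))
    obtain ⟨T, hT1, hT2⟩ := (hev.and (eventually_ge_atTop (0:ℝ))).exists
    refine ⟨T, hT2, ?_⟩
    have hIoc : IntegrableOn F (Set.Ioc 0 T) := hIoi0.mono_set Set.Ioc_subset_Ioi_self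
    have hIoiT : IntegrableOn F (Set.Ioi T) :=
      hint.mono_set (fun x hx => le_of_lt (lt_of_le_of_lt hT2 hx))
    have hsplit : ∫ x in Set.Ioi 0, F x
        = (∫ x in Set.Ioc 0 T, F x) + ∫ x in Set.Ioi T, F x := by
      rw [← MeasureTheory.setIntegral_union
        (Set.Ioc_disjoint_Ioi le_rfl) measurableSet_Ioi hIoc hIoiT,
        Set.Ioc_union_Ioi_eq_Ioi hT2]
    have hival : ∫ x in (0:ℝ)..T, F x = ∫ x in Set.Ioc 0 T, F x :=
      intervalIntegral.integral_of_le hT2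
    rw [hival] at hT1
    linarith
  refine ⟨T + δ, fun t ht => ?_⟩
  have ht0 : 0 ≤ t := le_trans (by linarith) ht
  have hFt0 : 0 ≤ F t := hF0 t ht0
  rw [Real.dist_eq, sub_zero, abs_of_nonneg hFt0]
  by_contra hcon
  push_neg at hcon
  have hεFt : ε ≤ F t := le_trans (min_le_left _ _) hcon
  have hbig : ∀ s ∈ Set.Ioc (t-δ) t, ε/2 ≤ F s := by
    intro s hs
    by_contra hsle
    push_neg at hsle
    have h0s : 0 ≤ s := by
      have : T < s := by linarith [hs.1]
      linarith
    have := key ε hεpos hε1 s t h0s hs.2 hsle.le hεFt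
    linarith [hs.1]
  have hsubIci : Set.Ioc (t-δ) t ⊆ Set.Ici (0:ℝ) := fun x hx => by
    have : T < x := by linarith [hx.1]
    simp only [Set.mem_Ici]; linarith
  have hIocInt : IntegrableOn F (Set.Ioc (t-δ) t) := hint.mono_set hsubIci
  have hlow : ε/2 * δ ≤ ∫ x in Set.Ioc (t-δ) t, F x := by
    have h := MeasureTheory.setIntegral_ge_of_const_le measurableSet_Ioc
      (by rw [Real.volume_Ioc]; exact ENNReal.ofReal_ne_top)
      hbig hIocInt
    rw [Real.volume_real_Ioc_of_le (by linarith), sub_sub_cancel, smul_eq_mul] at h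
    linarith
  have hIoiT : IntegrableOn F (Set.Ioi T) :=
    hint.mono_set (fun x hx => le_of_lt (lt_of_le_of_lt hT0 hx))
  have hup : ∫ x in Set.Ioc (t-δ) t, F x ≤ ∫ x in Set.Ioi T, F x := by
    apply MeasureTheory.setIntegral_mono_set hIoiT
    · exact (MeasureTheory.ae_restrict_iff' measurableSet_Ioi).2
        (Filter.Eventually.of_forall fun x hx => hF0 x (hT0.trans (le_of_lt hx)))
    · exact HasSubset.Subset.eventuallyLE (fun x hx => by
        simp only [Set.mem_Ioi]; linarith [hx.1])
  linarith
end
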